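/- Every natural number N can be written as the sum of three terms of the sequence (⌊n²/9⌋)_{n∈ℕ}, i.e., there exist natural numbers A, B, C with N = ⌊A²/9⌋ + ⌊B²/9⌋ + ⌊C²/9⌋. -/

import Mathlib

set_option maxHeartbeats 1000000

-- L1: a squarefree number ≥ 2 is not a rational square
lemma sqf_not_sq {u : ℕ} (hu : Squarefree u) (h2 : 2 ≤ u) (A B : ℤ)
    (hB : B ≠ 0) : A ^ 2 ≠ (u : ℤ) * B ^ 2 := by
  intro h
  have hA : (A.natAbs) ^ 2 = u * B.natAbs ^ 2 := by
    have := congrArg Int.natAbs h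
    simpa [Int.natAbs_mul, Int.natAbs_pow] using this
  have hb : B.natAbs ≠ 0 := by simpa using hB
  obtain ⟨g, a', b', hg, ha', hb', hco⟩ :
      ∃ g a' b', g ≠ 0 ∧ A.natAbs = g * a' ∧ B.natAbs = g * b' ∧ Nat.Coprime a' b' := by
    refine ⟨Nat.gcd A.natAbs B.natAbs, A.natAbs / Nat.gcd A.natAbs B.natAbs,
      B.natAbs / Nat.gcd A.natAbs B.natAbs, ?_, ?_, ?_, ?_⟩
    · exact fun h0 => hb (Nat.eq_zero_of_gcd_eq_zero_right h0)
    · exact (Nat.mul_div_cancel' (Nat.gcd_dvd_left _ _)).symm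
    · exact (Nat.mul_div_cancel' (Nat.gcd_dvd_right _ _)).symm
    · exact Nat.coprime_div_gcd_div_gcd (Nat.gcd_pos_of_pos_right _ (Nat.pos_of_ne_zero hb))
  rw [ha', hb'] at hA
  have hb'0 : b' ≠ 0 := by
    intro h0; apply hb; rw [hb', h0, Nat.mul_zero]
  have key : a' ^ 2 = u * b' ^ 2 := by
    have hg2 : 0 < g ^ 2 := by positivity
    refine Nat.eq_of_mul_eq_mul_left hg2 ?_
    ring_nf; ring_nf at hA; linarith [hA]
  have hdvd : b' ^ 2 ∣ a' ^ 2 := ⟨u, by linarith [key]⟩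
  have hco2 : Nat.Coprime (b' ^ 2) (a' ^ 2) := (hco.pow 2 2).symm
  have hb'1 : b' ^ 2 = 1 := hco2.eq_one_of_dvd hdvd
  have hu' : a' ^ 2 = u := by simpa [hb'1] using key
  have : IsUnit a' := hu a' ⟨1, by nlinarith [hu']⟩
  have ha'1 : a' = 1 := Nat.isUnit_iff.mp this
  rw [ha'1] at hu'
  simp at hu'
  omega

-- rounding: for d > 0, any x is d*y + r with 4r² ≤ d²
lemma round_div (d x : ℤ) (hd : 0 < d) : ∃ y r : ℤ, x = d * y + r ∧ 4 * r ^ 2 ≤ d ^ 2 := by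
  refine ⟨(x + d / 2) / d, (x + d / 2) % d - d / 2, ?_, ?_⟩
  · have := Int.mul_ediv_add_emod (x + d / 2) d
    linarith
  · have h1 : 0 ≤ (x + d / 2) % d := Int.emod_nonneg _ (by omega)
    have h2 : (x + d / 2) % d < d := Int.emod_lt_of_pos _ hd
    have h3 : 2 * (d / 2) ≤ d := by omega
    have h4 : d ≤ 2 * (d / 2) + 1 := by omega
    nlinarith [h1, h2, h3, h4]

-- ADC / Aubry descent: rational sum of three squares → integral
lemma adc (u : ℕ) : ∀ d : ℕ, d ≠ 0 → ∀ x y z : ℤ,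
    x ^ 2 + y ^ 2 + z ^ 2 = (u : ℤ) * (d : ℤ) ^ 2 →
    ∃ A B C : ℕ, A ^ 2 + B ^ 2 + C ^ 2 = u := by
  intro d
  induction d using Nat.strong_induction_on with
  | _ d IH =>
  intro hd0 x y z h
  have hdpos : (0 : ℤ) < (d : ℤ) := by exact_mod_cast Nat.pos_of_ne_zero hd0
  obtain ⟨y₁, r₁, hx, hr₁⟩ := round_div d x hdpos
  obtain ⟨y₂, r₂, hy, hr₂⟩ := round_div d y hdpos
  obtain ⟨y₃, r₃, hz, hr₃⟩ := round_div d z hdpos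
  set P : ℤ := x * y₁ + y * y₂ + z * y₃ with hP
  set Q : ℤ := y₁ ^ 2 + y₂ ^ 2 + y₃ ^ 2 with hQ
  set d' : ℤ := (u : ℤ) * d - 2 * P + d * Q with hd'
  have he : r₁ ^ 2 + r₂ ^ 2 + r₃ ^ 2 = d * d' := by
    rw [hd', hP, hQ]
    have e1 : r₁ = x - d * y₁ := by linarith
    have e2 : r₂ = y - d * y₂ := by linarith
    have e3 : r₃ = z - d * y₃ := by linarith
    rw [e1, e2, e3]
    linear_combination h
  have hd'nonneg : 0 ≤ d' := by
    nlinarith [sq_nonneg r₁, sq_nonneg r₂, sq_nonneg r₃, he, hdpos]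
  have hd'lt : d' < d := by
    nlinarith [he, hr₁, hr₂, hr₃, hdpos]
  rcases eq_or_lt_of_le hd'nonneg with h0 | hpos
  · -- d' = 0 : each rᵢ = 0, so u = y₁²+y₂²+y₃²
    have he0 : r₁ ^ 2 + r₂ ^ 2 + r₃ ^ 2 = 0 := by rw [he, ← h0]; ring
    have hsq1 : r₁ ^ 2 = 0 := le_antisymm (by linarith [sq_nonneg r₂, sq_nonneg r₃]) (sq_nonneg r₁)
    have hsq2 : r₂ ^ 2 = 0 := le_antisymm (by linarith [sq_nonneg r₁, sq_nonneg r₃]) (sq_nonneg r₂)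
    have hsq3 : r₃ ^ 2 = 0 := le_antisymm (by linarith [sq_nonneg r₁, sq_nonneg r₂]) (sq_nonneg r₃)
    have hr10 : r₁ = 0 := by exact pow_eq_zero_iff (by norm_num) |>.mp hsq1
    have hr20 : r₂ = 0 := by exact pow_eq_zero_iff (by norm_num) |>.mp hsq2
    have hr30 : r₃ = 0 := by exact pow_eq_zero_iff (by norm_num) |>.mp hsq3
    have hu : y₁ ^ 2 + y₂ ^ 2 + y₃ ^ 2 = (u : ℤ) := by
      rw [hr10, add_zero] at hx
      rw [hr20, add_zero] at hy
      rw [hr30, add_zero] at hz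
      rw [hx, hy, hz] at h
      have hd2 : ((d:ℤ))^2 ≠ 0 := by positivity
      refine mul_left_cancel₀ hd2 ?_
      linear_combination h
    refine ⟨y₁.natAbs, y₂.natAbs, y₃.natAbs, ?_⟩
    have : (y₁.natAbs : ℤ) ^ 2 + (y₂.natAbs : ℤ) ^ 2 + (y₃.natAbs : ℤ) ^ 2 = (u : ℤ) := by
      rw [Int.natCast_natAbs, Int.natCast_natAbs, Int.natCast_natAbs, sq_abs, sq_abs, sq_abs]
      exact hu
    exact_mod_cast this
  · -- descent step
    set A : ℤ := Q - u with hA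
    set B : ℤ := 2 * ((u : ℤ) * d - P) with hB
    have hABd : A * d + B = d' := by rw [hA, hB, hd']; ring
    have key : (A * x + B * y₁) ^ 2 + (A * y + B * y₂) ^ 2 + (A * z + B * y₃) ^ 2
        = (u : ℤ) * d' ^ 2 := by
      rw [← hABd, hA, hB, hP, hQ]
      linear_combination ((Q - u) ^ 2) * h
    set dn : ℕ := d'.toNat with hdn
    have hdn' : (dn : ℤ) = d' := Int.toNat_of_nonneg hd'nonneg
    have hdnlt : dn < d := by omega
    have hdn0 : dn ≠ 0 := by omega
    exact IH dn hdnlt hdn0 _ _ _ (by rw [hdn']; exact key)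

lemma pigeon (u q β : ℕ) (hu2 : 2 ≤ u) (hsf : Squarefree u) (hq : q.Prime)
    (hqu : u < q) (hq1 : u ∣ q + 1) (hβ : (q : ℤ) ∣ (β : ℤ) ^ 2 - (u : ℤ)) :
    ∃ P Q R : ℤ, P ^ 2 + (q : ℤ) * Q ^ 2 = (u : ℤ) * R ^ 2 ∧ R ≠ 0 ∧ Q ≠ 0 := by
  haveI : NeZero u := ⟨by omega⟩
  haveI : NeZero q := ⟨hq.pos.ne'⟩
  obtain ⟨n1, hn1⟩ : ∃ n, n = Nat.sqrt (q * u) := ⟨_, rfl⟩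
  obtain ⟨n2, hn2⟩ : ∃ n, n = Nat.sqrt u := ⟨_, rfl⟩
  obtain ⟨n3, hn3⟩ : ∃ n, n = Nat.sqrt q := ⟨_, rfl⟩
  have hqu_notsq : n1 ^ 2 ≠ q * u := by
    intro h
    have hdvd : q ∣ n1 ^ 2 := h ▸ Dvd.intro u rfl
    obtain ⟨m, hm⟩ := hq.dvd_of_dvd_pow hdvd
    have hqm : q * m ^ 2 = u := by
      refine Nat.eq_of_mul_eq_mul_left hq.pos ?_
      calc q * (q * m ^ 2) = (q * m) ^ 2 := by ring
        _ = n1 ^ 2 := by rw [hm]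
        _ = q * u := h
    have : q ≤ u := hqm ▸ Nat.le_of_dvd (by omega) ⟨m ^ 2, rfl⟩
    omega
  have hu_notsq : n2 ^ 2 ≠ u := by
    intro h
    have h1 : IsUnit n2 := hsf n2 (by rw [← pow_two]; exact h ▸ dvd_refl u)
    have h2 := Nat.isUnit_iff.mp h1
    rw [h2] at h
    simp at h
    omega
  have hq_notsq : n3 ^ 2 ≠ q := by
    intro h
    have hdvd : n3 ∣ q := ⟨n3, by rw [← h]; ring⟩
    have h2q := hq.two_le
    rcases hq.eq_one_or_self_of_dvd n3 hdvd with h1 | h1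
    · rw [h1] at h; simp at h; omega
    · rw [h1, pow_two] at h
      have : q * q = q * 1 := by omega
      have := Nat.eq_of_mul_eq_mul_left (show 0 < q by omega) this
      omega
  have hb1 : n1 ^ 2 < q * u := lt_of_le_of_ne (hn1 ▸ Nat.sqrt_le' (q * u)) hqu_notsq
  have hb2 : n2 ^ 2 < u := lt_of_le_of_ne (hn2 ▸ Nat.sqrt_le' u) hu_notsq
  have hb3 : n3 ^ 2 < q := lt_of_le_of_ne (hn3 ▸ Nat.sqrt_le' q) hq_notsq
  have hcard_lt : (Finset.univ : Finset (ZMod u × ZMod q)).card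
      < (Finset.range (n1 + 1) ×ˢ (Finset.range (n2 + 1) ×ˢ Finset.range (n3 + 1))).card := by
    rw [Finset.card_univ, Fintype.card_prod, ZMod.card, ZMod.card, Finset.card_product,
      Finset.card_product, Finset.card_range, Finset.card_range, Finset.card_range]
    have e1 : q * u < (n1 + 1) ^ 2 := hn1 ▸ Nat.lt_succ_sqrt' (q * u)
    have e2 : u < (n2 + 1) ^ 2 := hn2 ▸ Nat.lt_succ_sqrt' u
    have e3 : q < (n3 + 1) ^ 2 := hn3 ▸ Nat.lt_succ_sqrt' q
    have hp1 : 0 < (n1 + 1) ^ 2 := by positivity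
    have hp2 : 0 < (n1 + 1) ^ 2 * (n2 + 1) ^ 2 := by positivity
    have t1 : (q * u) * u < (n1 + 1) ^ 2 * (n2 + 1) ^ 2 :=
      Nat.mul_lt_mul_of_le_of_lt (le_of_lt e1) e2 hp1
    have t2 : ((q * u) * u) * q < ((n1 + 1) ^ 2 * (n2 + 1) ^ 2) * (n3 + 1) ^ 2 :=
      Nat.mul_lt_mul_of_le_of_lt (le_of_lt t1) e3 hp2
    have key : (u * q) ^ 2 < ((n1 + 1) * ((n2 + 1) * (n3 + 1))) ^ 2 := by
      calc (u * q) ^ 2 = ((q * u) * u) * q := by ring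
        _ < ((n1 + 1) ^ 2 * (n2 + 1) ^ 2) * (n3 + 1) ^ 2 := t2
        _ = ((n1 + 1) * ((n2 + 1) * (n3 + 1))) ^ 2 := by ring
    exact lt_of_pow_lt_pow_left₀ 2 (by positivity) key
  have hmaps : ∀ p ∈ (Finset.range (n1 + 1) ×ˢ (Finset.range (n2 + 1) ×ˢ Finset.range (n3 + 1))),
      (fun t : ℕ × ℕ × ℕ =>
      (((t.1 : ZMod u) - (t.2.1 : ZMod u), (t.1 : ZMod q) - (β : ZMod q) * (t.2.2 : ZMod q)) :
        ZMod u × ZMod q)) p ∈ (Finset.univ : Finset (ZMod u × ZMod q)) :=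
    fun p _ => Finset.mem_univ _
  obtain ⟨p₁, hp₁, p₂, hp₂, hne, heq⟩ :=
    Finset.exists_ne_map_eq_of_card_lt_of_maps_to hcard_lt hmaps
  obtain ⟨x₁, y₁, z₁⟩ := p₁
  obtain ⟨x₂, y₂, z₂⟩ := p₂
  simp only [Finset.mem_product, Finset.mem_range] at hp₁ hp₂
  obtain ⟨hx₁, hy₁, hz₁⟩ := hp₁
  obtain ⟨hx₂, hy₂, hz₂⟩ := hp₂
  have heq1 : ((x₁ : ZMod u) - (y₁ : ZMod u)) = ((x₂ : ZMod u) - (y₂ : ZMod u)) :=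
    congrArg Prod.fst heq
  have heq2 : ((x₁ : ZMod q) - (β : ZMod q) * (z₁ : ZMod q))
      = ((x₂ : ZMod q) - (β : ZMod q) * (z₂ : ZMod q)) := congrArg Prod.snd heq
  have hXY : (u : ℤ) ∣ (((x₁ : ℤ) - x₂) - ((y₁ : ℤ) - y₂)) := by
    have h0 : (((((x₁ : ℤ) - x₂) - ((y₁ : ℤ) - y₂)) : ℤ) : ZMod u) = 0 := by
      push_cast
      linear_combination heq1
    exact (ZMod.intCast_zmod_eq_zero_iff_dvd _ _).mp h0
  have hXZ : (q : ℤ) ∣ (((x₁ : ℤ) - x₂) - (β : ℤ) * ((z₁ : ℤ) - z₂)) := by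
    have h0 : (((((x₁ : ℤ) - x₂) - (β : ℤ) * ((z₁ : ℤ) - z₂)) : ℤ) : ZMod q) = 0 := by
      push_cast
      linear_combination heq2
    exact (ZMod.intCast_zmod_eq_zero_iff_dvd _ _).mp h0
  obtain ⟨X, hX⟩ : ∃ X : ℤ, X = (x₁ : ℤ) - x₂ := ⟨_, rfl⟩
  obtain ⟨Y, hY⟩ : ∃ Y : ℤ, Y = (y₁ : ℤ) - y₂ := ⟨_, rfl⟩
  obtain ⟨Z, hZ⟩ : ∃ Z : ℤ, Z = (z₁ : ℤ) - z₂ := ⟨_, rfl⟩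
  rw [← hX, ← hY] at hXY
  rw [← hX, ← hZ] at hXZ
  have hu_dvd : (u : ℤ) ∣ X ^ 2 + (q : ℤ) * Y ^ 2 - (u : ℤ) * Z ^ 2 := by
    obtain ⟨k₁, hk₁⟩ := hXY
    obtain ⟨k₂, hk₂⟩ : (u : ℤ) ∣ ((q : ℤ) + 1) := by exact_mod_cast Int.natCast_dvd_natCast.mpr hq1
    exact ⟨k₁ * (X + Y) + k₂ * Y ^ 2 - Z ^ 2, by linear_combination (X + Y) * hk₁ + Y ^ 2 * hk₂⟩
  have hq_dvd : (q : ℤ) ∣ X ^ 2 + (q : ℤ) * Y ^ 2 - (u : ℤ) * Z ^ 2 := by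
    obtain ⟨k₃, hk₃⟩ := hXZ
    obtain ⟨k₄, hk₄⟩ := hβ
    exact ⟨k₃ * (X + (β : ℤ) * Z) + k₄ * Z ^ 2 + Y ^ 2,
      by linear_combination (X + (β : ℤ) * Z) * hk₃ + Z ^ 2 * hk₄⟩
  have hco : IsCoprime (u : ℤ) (q : ℤ) := by
    rw [Int.isCoprime_iff_gcd_eq_one, Int.gcd_natCast_natCast]
    have hndvd : ¬ q ∣ u := fun h => absurd (Nat.le_of_dvd (by omega) h) (by omega)
    exact ((Nat.Prime.coprime_iff_not_dvd hq).mpr hndvd).symm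
  have huq_dvd : (u : ℤ) * (q : ℤ) ∣ X ^ 2 + (q : ℤ) * Y ^ 2 - (u : ℤ) * Z ^ 2 :=
    hco.mul_dvd hu_dvd hq_dvd
  have hXb : X ^ 2 ≤ (n1 : ℤ) ^ 2 := by
    apply sq_le_sq' <;> rw [hX] <;> push_cast <;> omega
  have hYb : Y ^ 2 ≤ (n2 : ℤ) ^ 2 := by
    apply sq_le_sq' <;> rw [hY] <;> push_cast <;> omega
  have hZb : Z ^ 2 ≤ (n3 : ℤ) ^ 2 := by
    apply sq_le_sq' <;> rw [hZ] <;> push_cast <;> omega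
  have hb1' : (n1 : ℤ) ^ 2 < (q : ℤ) * u := by exact_mod_cast hb1
  have hb2' : (n2 : ℤ) ^ 2 < (u : ℤ) := by exact_mod_cast hb2
  have hb3' : (n3 : ℤ) ^ 2 < (q : ℤ) := by exact_mod_cast hb3
  have hqpos : (0 : ℤ) < q := by exact_mod_cast hq.pos
  have hupos : (0 : ℤ) < u := by exact_mod_cast (by omega : 0 < u)
  obtain ⟨k, hk⟩ := huq_dvd
  have hx' : X ^ 2 < (q : ℤ) * u := lt_of_le_of_lt hXb hb1'
  have hy' : (q : ℤ) * Y ^ 2 < (q : ℤ) * u := by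
    have t1 := mul_le_mul_of_nonneg_left hYb hqpos.le
    have t2 := mul_lt_mul_of_pos_left hb2' hqpos
    linarith
  have hz' : (u : ℤ) * Z ^ 2 < (u : ℤ) * q := by
    have t1 := mul_le_mul_of_nonneg_left hZb hupos.le
    have t2 := mul_lt_mul_of_pos_left hb3' hupos
    linarith
  have hz0 : (0 : ℤ) ≤ (u : ℤ) * Z ^ 2 := by positivity
  have hx0 : (0 : ℤ) ≤ X ^ 2 := sq_nonneg X
  have hy0 : (0 : ℤ) ≤ (q : ℤ) * Y ^ 2 := by positivity
  have huqpos : (0 : ℤ) < (u : ℤ) * q := by positivity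
  have hkcase : k = 0 ∨ k = 1 := by
    have hlt : (u : ℤ) * q * k < (u : ℤ) * q * 2 := by
      rw [← hk]; linarith
    have hgt : (u : ℤ) * q * (-1) < (u : ℤ) * q * k := by
      rw [← hk]; linarith
    have c1 : k < 2 := lt_of_mul_lt_mul_left hlt (by positivity)
    have c2 : -1 < k := lt_of_mul_lt_mul_left hgt (by positivity)
    omega
  have hnt : ¬(X = 0 ∧ Y = 0 ∧ Z = 0) := by
    rintro ⟨hX0, hY0, hZ0⟩
    rw [hX] at hX0; rw [hY] at hY0; rw [hZ] at hZ0
    apply hne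
    have e1 : x₁ = x₂ := by omega
    have e2 : y₁ = y₂ := by omega
    have e3 : z₁ = z₂ := by omega
    simp [e1, e2, e3]
  rcases hkcase with hk0 | hk1
  · have hV0 : X ^ 2 + (q : ℤ) * Y ^ 2 = (u : ℤ) * Z ^ 2 := by
      rw [hk0] at hk; linarith [hk]
    have hZ0 : Z ≠ 0 := by
      intro h0
      rw [h0] at hV0
      have hXsq : X ^ 2 = 0 := by
        have : (0:ℤ) ≤ (q : ℤ) * Y ^ 2 := by positivity
        have hle : X ^ 2 ≤ 0 := by
          have h00 : X ^ 2 + (q:ℤ) * Y ^ 2 = 0 := by rw [hV0]; ring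
          linarith
        exact le_antisymm hle (sq_nonneg X)
      have hYsq : Y ^ 2 = 0 := by
        have h00 : X ^ 2 + (q:ℤ) * Y ^ 2 = 0 := by rw [hV0]; ring
        have hle : (q:ℤ) * Y ^ 2 ≤ 0 := by linarith [sq_nonneg X]
        have : (q:ℤ) * Y ^ 2 = 0 := le_antisymm hle (by positivity)
        rcases mul_eq_zero.mp this with hc | hc
        · exact absurd hc (by positivity)
        · exact hc
      have hX0 : X = 0 := by
        have := pow_eq_zero_iff (n := 2) (by norm_num) |>.mp hXsq; exact this
      have hY0 : Y = 0 := by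
        have := pow_eq_zero_iff (n := 2) (by norm_num) |>.mp hYsq; exact this
      exact hnt ⟨hX0, hY0, h0⟩
    have hY0 : Y ≠ 0 := by
      intro h0
      rw [h0] at hV0
      exact sqf_not_sq hsf hu2 X Z hZ0 (by linarith [hV0])
    exact ⟨X, Y, Z, hV0, hZ0, hY0⟩
  · rw [hk1, mul_one] at hk
    refine ⟨X * Z + (q : ℤ) * Y, Y * Z - X, Z ^ 2 + q, ?_, by positivity, ?_⟩
    · linear_combination (Z ^ 2 + (q : ℤ)) * hk
    · intro h0
      have hid : (X * Z + (q : ℤ) * Y) ^ 2 = (u : ℤ) * (Z ^ 2 + (q : ℤ)) ^ 2 := by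
        have hfull : (X * Z + (q : ℤ) * Y) ^ 2 + (q : ℤ) * (Y * Z - X) ^ 2
            = (u : ℤ) * (Z ^ 2 + (q : ℤ)) ^ 2 := by linear_combination (Z ^ 2 + (q : ℤ)) * hk
        rw [h0] at hfull
        linarith [hfull]
      exact sqf_not_sq hsf hu2 _ _ (by positivity) hid

theorem sots_squarefree (u : ℕ) (hsf : Squarefree u) (hu4 : u % 4 = 1 ∨ u % 4 = 2) :
    ∃ a b c : ℕ, a ^ 2 + b ^ 2 + c ^ 2 = u := by
  rcases eq_or_ne u 1 with rfl | hu1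
  · exact ⟨1, 0, 0, by norm_num⟩
  have hu2 : 2 ≤ u := by omega
  -- odd part u'
  obtain ⟨u', hcase, hu'odd⟩ : ∃ u', (u % 2 = 1 ∧ u = u' ∨ u % 4 = 2 ∧ u = 2 * u') ∧ u' % 2 = 1 := by
    rcases Nat.even_or_odd u with he | ho
    · obtain ⟨j, hj⟩ := he
      exact ⟨u / 2, Or.inr ⟨by omega, by omega⟩, by omega⟩
    · exact ⟨u, Or.inl ⟨Nat.odd_iff.mp ho, rfl⟩, Nat.odd_iff.mp ho⟩
  have hu'pos : 0 < u' := by omega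
  haveI : NeZero u' := ⟨by omega⟩
  -- choice of the 8-class w
  obtain ⟨w, hwval⟩ : ∃ w : ℕ, (u % 8 = 6 ∧ w = 5) ∨ (u % 8 ≠ 6 ∧ w = 1) := by
    rcases eq_or_ne (u % 8) 6 with h | h
    · exact ⟨5, Or.inl ⟨h, rfl⟩⟩
    · exact ⟨1, Or.inr ⟨h, rfl⟩⟩
  have hw15 : w = 1 ∨ w = 5 := by rcases hwval with ⟨-, h⟩ | ⟨-, h⟩ <;> omega
  have co : Nat.Coprime 8 u' := by
    have h2 : Nat.Coprime 2 u' := Nat.coprime_two_left.mpr (Nat.odd_iff.mpr hu'odd)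
    have : (8 : ℕ) = 2 ^ 3 := by norm_num
    rw [this]
    exact Nat.Coprime.pow_left 3 h2
  haveI : NeZero (8 * u') := ⟨by positivity⟩
  set CR := ZMod.chineseRemainder co with hCR
  set a : ZMod (8 * u') := CR.symm ((w : ZMod 8), (-1 : ZMod u')) with ha_def
  have hpair : IsUnit ((w : ZMod 8), (-1 : ZMod u')) := by
    apply IsUnit.of_mul_eq_one ((w : ZMod 8), (-1 : ZMod u'))
    rw [Prod.mk_mul_mk]
    have h1 : (w : ZMod 8) * w = 1 := by rcases hw15 with h | h <;> subst h <;> decide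
    have h2 : (-1 : ZMod u') * (-1) = 1 := by ring
    rw [h1, h2]
    rfl
  have ha : IsUnit a := hpair.map CR.symm
  obtain ⟨q, hqgt, hqp, hqmod⟩ := Nat.forall_exists_prime_gt_and_eq_mod ha (8 * u + 9)
  -- extract congruences
  have hqpair : ((q : ZMod 8), (q : ZMod u')) = ((w : ZMod 8), (-1 : ZMod u')) := by
    have h1 : CR ((q : ZMod (8 * u'))) = ((q : ZMod 8 × ZMod u')) := map_natCast CR q
    have h2 : CR a = ((w : ZMod 8), (-1 : ZMod u')) := by
      rw [ha_def]; exact (ZMod.chineseRemainder co).apply_symm_apply _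
    have h3 := congrArg CR hqmod
    rw [h1, h2] at h3
    rw [← h3]
    exact Prod.ext (Prod.fst_natCast q).symm (Prod.snd_natCast q).symm
  have hq8' : (q : ZMod 8) = (w : ZMod 8) := congrArg Prod.fst hqpair
  have hqu'' : (q : ZMod u') = (-1 : ZMod u') := congrArg Prod.snd hqpair
  have hq8 : q % 8 = w := by
    have h' : q % 8 = w % 8 := (ZMod.natCast_eq_natCast_iff q w 8).mp hq8'
    rcases hw15 with h | h <;> subst h <;> omega
  have hqu'1 : u' ∣ q + 1 := by
    have h0 : ((q + 1 : ℕ) : ZMod u') = 0 := by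
      push_cast
      rw [hqu'']
      ring
    exact (ZMod.natCast_eq_zero_iff _ _).mp h0
  have hq2 : q % 2 = 1 := by omega
  have hq4 : q % 4 = 1 := by rcases hw15 with h | h <;> omega
  have hqodd : Odd q := Nat.odd_iff.mpr hq2
  have hu'odd' : Odd u' := Nat.odd_iff.mpr hu'odd
  have hqu1 : u ∣ q + 1 := by
    rcases hcase with ⟨-, rfl⟩ | ⟨-, h2u⟩
    · exact hqu'1
    · rw [h2u]
      have h2dvd : 2 ∣ q + 1 := ⟨(q + 1) / 2, by omega⟩
      have co2 : Nat.Coprime 2 u' := Nat.coprime_two_left.mpr hu'odd'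
      exact Nat.Coprime.mul_dvd_of_dvd_of_dvd co2 h2dvd hqu'1
  -- Jacobi symbol computation
  have hmodint : (q : ℤ) % (u' : ℤ) = (-1 : ℤ) % (u' : ℤ) := by
    have hd : (u' : ℤ) ∣ (-1 : ℤ) - (q : ℤ) := by
      have : (u' : ℤ) ∣ ((q : ℤ) + 1) := by exact_mod_cast Int.natCast_dvd_natCast.mpr hqu'1
      have h2 : (-1 : ℤ) - (q : ℤ) = -((q : ℤ) + 1) := by ring
      rw [h2]
      exact dvd_neg.mpr this
    exact Int.modEq_iff_dvd.mpr hd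
  have hJu' : jacobiSym (u' : ℤ) q = ZMod.χ₄ u' := by
    rw [jacobiSym.quadratic_reciprocity_one_mod_four' hu'odd' hq4]
    rw [jacobiSym.mod_left' hmodint]
    exact jacobiSym.at_neg_one hu'odd'
  have hJ : jacobiSym (u : ℤ) q = 1 := by
    rcases hcase with ⟨hodd, rfl⟩ | ⟨h42, h2u⟩
    · rw [hJu']
      exact ZMod.χ₄_nat_one_mod_four (by omega)
    · have hcast : (u : ℤ) = 2 * (u' : ℤ) := by exact_mod_cast congrArg (Nat.cast : ℕ → ℤ) h2u
      rw [hcast, jacobiSym.mul_left, hJu', jacobiSym.at_two hqodd]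
      rw [ZMod.χ₈_nat_eq_if_mod_eight]
      rcases hwval with ⟨h6, hw5⟩ | ⟨h6, hw1⟩
      · have hu'3 : u' % 4 = 3 := by omega
        rw [ZMod.χ₄_nat_three_mod_four hu'3]
        have : q % 8 = 5 := by omega
        simp [this, hq2]
      · have hu'1 : u' % 4 = 1 := by omega
        rw [ZMod.χ₄_nat_one_mod_four hu'1]
        have : q % 8 = 1 := by omega
        simp [this, hq2]
  haveI : Fact q.Prime := ⟨hqp⟩
  have hsq : IsSquare ((u : ℤ) : ZMod q) := ZMod.isSquare_of_jacobiSym_eq_one hJ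
  obtain ⟨b0, hb0⟩ := hsq
  have hβc : ((b0.val : ℕ) : ZMod q) = b0 := by simp [ZMod.natCast_val, ZMod.cast_id]
  have hβ : (q : ℤ) ∣ ((b0.val : ℤ) ^ 2 - (u : ℤ)) := by
    have hu_eq : ((u : ℕ) : ZMod q) = b0 * b0 := by exact_mod_cast hb0
    have h0 : (((b0.val : ℤ) ^ 2 - (u : ℤ) : ℤ) : ZMod q) = 0 := by
      push_cast
      rw [hβc, hu_eq]
      ring
    exact (ZMod.intCast_zmod_eq_zero_iff_dvd _ _).mp h0
  have hqu : u < q := by omega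
  obtain ⟨P, Q, R, hPQR, hR, hQ⟩ := pigeon u q b0.val hu2 hsf hqp hqu hqu1 hβ
  obtain ⟨s, t, hst⟩ := Nat.Prime.sq_add_sq (p := q) (by omega)
  have hRnat : R.natAbs ≠ 0 := by simpa using hR
  have hmain : P ^ 2 + ((s : ℤ) * Q) ^ 2 + ((t : ℤ) * Q) ^ 2 = (u : ℤ) * ((R.natAbs : ℤ)) ^ 2 := by
    have hq_eq : ((s : ℤ) ^ 2 + (t : ℤ) ^ 2) = (q : ℤ) := by exact_mod_cast hst
    have habs : ((R.natAbs : ℤ)) ^ 2 = R ^ 2 := by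
      rw [Int.natCast_natAbs, sq_abs]
    rw [habs]
    linear_combination hPQR + Q ^ 2 * hq_eq
  exact adc u R.natAbs hRnat _ _ _ hmain

theorem sots_mod4 (M : ℕ) (hM : M % 4 = 1 ∨ M % 4 = 2) :
    ∃ a b c : ℕ, a ^ 2 + b ^ 2 + c ^ 2 = M := by
  obtain ⟨u, t, htu, hsf⟩ := Nat.sq_mul_squarefree M
  have hM0 : M ≠ 0 := by omega
  have ht0 : t ≠ 0 := by rintro rfl; simp at htu; omega
  have htodd : t % 2 = 1 := by
    rcases Nat.even_or_odd t with he | ho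
    · exfalso
      obtain ⟨j, rfl⟩ := he
      have : (j + j) ^ 2 * u = 4 * (j ^ 2 * u) := by ring
      omega
    · exact Nat.odd_iff.mp ho
  have ht4 : t ^ 2 % 4 = 1 := by
    obtain ⟨j, hj⟩ : ∃ j, t = 2 * j + 1 := ⟨t / 2, by omega⟩
    have : t ^ 2 = 4 * (j * j + j) + 1 := by rw [hj]; ring
    omega
  have hu4' : u % 4 = 1 ∨ u % 4 = 2 := by
    have : t ^ 2 * u = M := htu
    have h1 : (t ^ 2 % 4) * (u % 4) % 4 = M % 4 := by
      rw [← Nat.mul_mod]; omega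
    rw [ht4] at h1
    omega
  obtain ⟨a, b, c, habc⟩ := sots_squarefree u hsf hu4'
  exact ⟨t * a, t * b, t * c, by rw [← htu, ← habc]; ring⟩

lemma sq_mod9 (a : ℕ) : a ^ 2 % 9 = 0 ∨ a ^ 2 % 9 = 1 ∨ a ^ 2 % 9 = 4 ∨ a ^ 2 % 9 = 7 := by
  have h : a ^ 2 % 9 = (a % 9) ^ 2 % 9 := by rw [Nat.pow_mod]
  rw [h]
  have h9 : a % 9 < 9 := Nat.mod_lt _ (by norm_num)
  revert h9
  generalize a % 9 = x
  intro h9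
  interval_cases x <;> decide

-- finish: from a three-squares rep of 9N+s with s ∈ {1,7}
lemma finish9 (N s a b c : ℕ) (hs : s = 1 ∨ s = 7)
    (h : a ^ 2 + b ^ 2 + c ^ 2 = 9 * N + s) :
    N = a ^ 2 / 9 + b ^ 2 / 9 + c ^ 2 / 9 := by
  have ha := sq_mod9 a
  have hb := sq_mod9 b
  have hc := sq_mod9 c
  have da := Nat.div_add_mod (a ^ 2) 9
  have db := Nat.div_add_mod (b ^ 2) 9
  have dc := Nat.div_add_mod (c ^ 2) 9
  omega

theorem stmt_4 (N : ℕ) :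
    ∃ A B C : ℕ, N = A ^ 2 / 9 + B ^ 2 / 9 + C ^ 2 / 9 := by
  by_cases h4 : N % 4 = 0 ∨ N % 4 = 1
  · obtain ⟨a, b, c, habc⟩ := sots_mod4 (9 * N + 1) (by omega)
    exact ⟨a, b, c, finish9 N 1 a b c (Or.inl rfl) habc⟩
  · obtain ⟨a, b, c, habc⟩ := sots_mod4 (9 * N + 7) (by omega)
    exact ⟨a, b, c, finish9 N 7 a b c (Or.inr rfl) habc⟩
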